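/- (Quasi-residual bound) Suppose x_m = x₀ + V_m z_m where A V_m = V_{m+1} H_{m+1,m}, r₀ = b - A x₀ = V_{m+1}(β e₁) with β = ‖r₀‖₂, and the columns of V_{m+1} are unit quaternion vectors. Then the residual r_m = b - A x_m satisfies ‖r_m‖₂ ≤ √(m+1) · ‖β e₁ - H_{m+1,m} z_m‖₂. -/
import Mathlib

open Quaternion Matrix

/-- The quaternionic Euclidean norm `‖x‖₂ = √(Σᵢ |xᵢ|²)` on `ℚⁿ`. -/
noncomputable def qNorm {n : ℕ} (x : Fin n → ℍ[ℝ]) : ℝ :=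
  Real.sqrt (∑ i, ‖x i‖ ^ 2)

lemma qNorm_mulVec_le {n m : ℕ} (V : Matrix (Fin n) (Fin (m + 1)) ℍ[ℝ])
    (y : Fin (m + 1) → ℍ[ℝ]) (hcol : ∀ k, qNorm (fun i => V i k) = 1) :
    qNorm (V *ᵥ y) ≤ Real.sqrt (m + 1) * qNorm y := by
  have hcolsum : ∀ k, (∑ i, ‖V i k‖ ^ 2) = 1 := by
    intro k
    have h := hcol k
    unfold qNorm at h
    have hnn : (0:ℝ) ≤ ∑ i, ‖V i k‖ ^ 2 :=
      Finset.sum_nonneg fun _ _ => sq_nonneg _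
    nlinarith [Real.sq_sqrt hnn]
  have key : (∑ i, ‖(V *ᵥ y) i‖ ^ 2) ≤ (m + 1) * ∑ k, ‖y k‖ ^ 2 := by
    have step : ∀ i, ‖(V *ᵥ y) i‖ ^ 2 ≤ (∑ k, ‖V i k‖ ^ 2) * ∑ k, ‖y k‖ ^ 2 := by
      intro i
      have h1 : ‖(V *ᵥ y) i‖ ≤ ∑ k, ‖V i k‖ * ‖y k‖ := by
        simpa [Matrix.mulVec, dotProduct] using
          norm_sum_le Finset.univ (fun k => V i k * y k) |>.trans
            (Finset.sum_le_sum fun k _ => norm_mul_le _ _)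
      calc ‖(V *ᵥ y) i‖ ^ 2 ≤ (∑ k, ‖V i k‖ * ‖y k‖) ^ 2 := by
            apply sq_le_sq' <;> nlinarith [norm_nonneg ((V *ᵥ y) i),
              Finset.sum_nonneg (fun k (_ : k ∈ Finset.univ) =>
                mul_nonneg (norm_nonneg (V i k)) (norm_nonneg (y k)))]
        _ ≤ (∑ k, ‖V i k‖ ^ 2) * ∑ k, ‖y k‖ ^ 2 :=
            Finset.sum_mul_sq_le_sq_mul_sq _ _ _
    calc (∑ i, ‖(V *ᵥ y) i‖ ^ 2)
        ≤ ∑ i : Fin n, (∑ k, ‖V i k‖ ^ 2) * ∑ k, ‖y k‖ ^ 2 :=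
          Finset.sum_le_sum fun i _ => step i
      _ = (∑ i : Fin n, ∑ k, ‖V i k‖ ^ 2) * ∑ k, ‖y k‖ ^ 2 := by
          rw [Finset.sum_mul]
      _ = (m + 1) * ∑ k, ‖y k‖ ^ 2 := by
          rw [Finset.sum_comm]
          simp [hcolsum]
  unfold qNorm
  calc Real.sqrt (∑ i, ‖(V *ᵥ y) i‖ ^ 2)
      ≤ Real.sqrt ((m + 1) * ∑ k, ‖y k‖ ^ 2) := Real.sqrt_le_sqrt key
    _ = Real.sqrt (m + 1) * Real.sqrt (∑ k, ‖y k‖ ^ 2) := by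
        rw [Real.sqrt_mul (by positivity)]

theorem quasi_residual_bound {n m : ℕ}
    (A : Matrix (Fin n) (Fin n) ℍ[ℝ]) (b x₀ : Fin n → ℍ[ℝ])
    (Vm : Matrix (Fin n) (Fin m) ℍ[ℝ])
    (Vm1 : Matrix (Fin n) (Fin (m + 1)) ℍ[ℝ])
    (H : Matrix (Fin (m + 1)) (Fin m) ℍ[ℝ])
    (z : Fin m → ℍ[ℝ]) (β : ℝ)
    (hAV : A * Vm = Vm1 * H)
    (hβ : β = qNorm (b - A *ᵥ x₀))
    (hr0 : b - A *ᵥ x₀ = Vm1 *ᵥ (fun i => if i = 0 then ((β : ℝ) : ℍ[ℝ]) else 0))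
    (hcol : ∀ k, qNorm (fun i => Vm1 i k) = 1) :
    qNorm (b - A *ᵥ (x₀ + Vm *ᵥ z)) ≤
      Real.sqrt (m + 1) *
        qNorm ((fun i => if i = 0 then ((β : ℝ) : ℍ[ℝ]) else 0) - H *ᵥ z) := by
  have hres : b - A *ᵥ (x₀ + Vm *ᵥ z) =
      Vm1 *ᵥ ((fun i => if i = 0 then ((β : ℝ) : ℍ[ℝ]) else 0) - H *ᵥ z) := by
    rw [Matrix.mulVec_add, Matrix.mulVec_mulVec, hAV, ← Matrix.mulVec_mulVec,
      Matrix.mulVec_sub, ← hr0]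
    abel
  rw [hres]
  exact qNorm_mulVec_le Vm1 _ hcol
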